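/- The Smorodinsky–Winternitz Hamiltonian H = ½(p₁² + p₂²) + β₁(q₁² + q₂²) + β₂/q₁² + β₃/q₂² Poisson-commutes with the function X = m₁₂² + 2β₂q₂²/q₁² + 2β₃q₁²/q₂², where m₁₂ = q₁p₂ − q₂p₁: that is, {X, H} = 0, where { , } is the canonical Poisson bracket on ℝ⁴ (away from q₁ = 0 and q₂ = 0). -/

import Mathlib

/-- The Smorodinsky–Winternitz Hamiltonian
`H = ½(p₁² + p₂²) + β₁(q₁² + q₂²) + β₂/q₁² + β₃/q₂²`. -/
noncomputable def Hsw (β₁ β₂ β₃ q₁ q₂ p₁ p₂ : ℝ) : ℝ :=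
  (p₁ ^ 2 + p₂ ^ 2) / 2 + β₁ * (q₁ ^ 2 + q₂ ^ 2) + β₂ / q₁ ^ 2 + β₃ / q₂ ^ 2

/-- The classical second-order integral `X = m₁₂² + 2β₂q₂²/q₁² + 2β₃q₁²/q₂²`. -/
noncomputable def Xsw (β₂ β₃ q₁ q₂ p₁ p₂ : ℝ) : ℝ :=
  (q₁ * p₂ - q₂ * p₁) ^ 2 + 2 * β₂ * q₂ ^ 2 / q₁ ^ 2 + 2 * β₃ * q₁ ^ 2 / q₂ ^ 2

lemma deriv_X_q1 (β₂ β₃ q₁ q₂ p₁ p₂ : ℝ) (h1 : q₁ ≠ 0) :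
    deriv (fun t => Xsw β₂ β₃ t q₂ p₁ p₂) q₁ =
      2 * (q₁ * p₂ - q₂ * p₁) * p₂ - 2 * (2 * β₂ * q₂ ^ 2) * q₁ / (q₁ ^ 2) ^ 2
        + 2 * β₃ * (2 * q₁) / q₂ ^ 2 := by
  have hpow : (q₁ : ℝ) ^ 2 ≠ 0 := pow_ne_zero 2 h1
  have h : HasDerivAt (fun t => Xsw β₂ β₃ t q₂ p₁ p₂)
      (2 * (q₁ * p₂ - q₂ * p₁) * p₂ - 2 * (2 * β₂ * q₂ ^ 2) * q₁ / (q₁ ^ 2) ^ 2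
        + 2 * β₃ * (2 * q₁) / q₂ ^ 2) q₁ := by
    have ha : HasDerivAt (fun t : ℝ => (t * p₂ - q₂ * p₁) ^ 2)
        (2 * (q₁ * p₂ - q₂ * p₁) * p₂) q₁ := by
      have := (((hasDerivAt_id q₁).mul_const p₂).sub_const (q₂ * p₁)).pow 2
      refine (this.congr_deriv ?_).congr_of_eventuallyEq (Filter.Eventually.of_forall fun t => ?_)
      · simp <;> ring
      · simp [Xsw, Hsw] <;> ring
    have hb : HasDerivAt (fun t : ℝ => 2 * β₂ * q₂ ^ 2 / t ^ 2)
        (-(2 * (2 * β₂ * q₂ ^ 2) * q₁ / (q₁ ^ 2) ^ 2)) q₁ := by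
      have := (hasDerivAt_const q₁ (2 * β₂ * q₂ ^ 2)).div
        ((hasDerivAt_id q₁).pow 2) hpow
      refine (this.congr_deriv ?_).congr_of_eventuallyEq (Filter.Eventually.of_forall fun t => ?_)
      · simp <;> ring
      · simp [Xsw, Hsw] <;> ring
    have hc : HasDerivAt (fun t : ℝ => 2 * β₃ * t ^ 2 / q₂ ^ 2)
        (2 * β₃ * (2 * q₁) / q₂ ^ 2) q₁ := by
      have := (((hasDerivAt_id q₁).pow 2).const_mul (2 * β₃)).div_const (q₂ ^ 2)
      refine (this.congr_deriv ?_).congr_of_eventuallyEq (Filter.Eventually.of_forall fun t => ?_)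
      · simp <;> ring
      · simp [Xsw, Hsw] <;> ring
    have := (ha.add hb).add hc
    refine (this.congr_deriv ?_).congr_of_eventuallyEq (Filter.Eventually.of_forall fun t => ?_)
    · simp <;> ring
    · simp [Xsw, Hsw] <;> ring
  exact h.deriv

lemma deriv_X_q2 (β₂ β₃ q₁ q₂ p₁ p₂ : ℝ) (h2 : q₂ ≠ 0) :
    deriv (fun t => Xsw β₂ β₃ q₁ t p₁ p₂) q₂ =
      -(2 * (q₁ * p₂ - q₂ * p₁) * p₁) + 2 * β₂ * (2 * q₂) / q₁ ^ 2
        - 2 * (2 * β₃ * q₁ ^ 2) * q₂ / (q₂ ^ 2) ^ 2 := by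
  have hpow : (q₂ : ℝ) ^ 2 ≠ 0 := pow_ne_zero 2 h2
  have h : HasDerivAt (fun t => Xsw β₂ β₃ q₁ t p₁ p₂)
      (-(2 * (q₁ * p₂ - q₂ * p₁) * p₁) + 2 * β₂ * (2 * q₂) / q₁ ^ 2
        - 2 * (2 * β₃ * q₁ ^ 2) * q₂ / (q₂ ^ 2) ^ 2) q₂ := by
    have ha : HasDerivAt (fun t : ℝ => (q₁ * p₂ - t * p₁) ^ 2)
        (-(2 * (q₁ * p₂ - q₂ * p₁) * p₁)) q₂ := by
      have := ((hasDerivAt_const q₂ (q₁ * p₂)).sub ((hasDerivAt_id q₂).mul_const p₁)).pow 2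
      refine (this.congr_deriv ?_).congr_of_eventuallyEq (Filter.Eventually.of_forall fun t => ?_)
      · simp <;> ring
      · simp [Xsw, Hsw] <;> ring
    have hb : HasDerivAt (fun t : ℝ => 2 * β₂ * t ^ 2 / q₁ ^ 2)
        (2 * β₂ * (2 * q₂) / q₁ ^ 2) q₂ := by
      have := (((hasDerivAt_id q₂).pow 2).const_mul (2 * β₂)).div_const (q₁ ^ 2)
      refine (this.congr_deriv ?_).congr_of_eventuallyEq (Filter.Eventually.of_forall fun t => ?_)
      · simp <;> ring
      · simp [Xsw, Hsw] <;> ring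
    have hc : HasDerivAt (fun t : ℝ => 2 * β₃ * q₁ ^ 2 / t ^ 2)
        (-(2 * (2 * β₃ * q₁ ^ 2) * q₂ / (q₂ ^ 2) ^ 2)) q₂ := by
      have := (hasDerivAt_const q₂ (2 * β₃ * q₁ ^ 2)).div
        ((hasDerivAt_id q₂).pow 2) hpow
      refine (this.congr_deriv ?_).congr_of_eventuallyEq (Filter.Eventually.of_forall fun t => ?_)
      · simp <;> ring
      · simp [Xsw, Hsw] <;> ring
    have := (ha.add hb).add hc
    refine (this.congr_deriv ?_).congr_of_eventuallyEq (Filter.Eventually.of_forall fun t => ?_)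
    · ring
    · simp [Xsw, Hsw] <;> ring
  exact h.deriv

lemma deriv_X_p1 (β₂ β₃ q₁ q₂ p₁ p₂ : ℝ) :
    deriv (fun t => Xsw β₂ β₃ q₁ q₂ t p₂) p₁ =
      -(2 * (q₁ * p₂ - q₂ * p₁) * q₂) := by
  have h : HasDerivAt (fun t => Xsw β₂ β₃ q₁ q₂ t p₂)
      (-(2 * (q₁ * p₂ - q₂ * p₁) * q₂)) p₁ := by
    have ha : HasDerivAt (fun t : ℝ => (q₁ * p₂ - q₂ * t) ^ 2)
        (-(2 * (q₁ * p₂ - q₂ * p₁) * q₂)) p₁ := by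
      have := ((hasDerivAt_const p₁ (q₁ * p₂)).sub ((hasDerivAt_id p₁).const_mul q₂)).pow 2
      refine (this.congr_deriv ?_).congr_of_eventuallyEq (Filter.Eventually.of_forall fun t => ?_)
      · simp <;> ring
      · simp [Xsw, Hsw] <;> ring
    have := (ha.add (hasDerivAt_const p₁ (2 * β₂ * q₂ ^ 2 / q₁ ^ 2))).add
      (hasDerivAt_const p₁ (2 * β₃ * q₁ ^ 2 / q₂ ^ 2))
    refine (this.congr_deriv ?_).congr_of_eventuallyEq (Filter.Eventually.of_forall fun t => ?_)
    · simp <;> ring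
    · simp [Xsw, Hsw] <;> ring
  exact h.deriv

lemma deriv_X_p2 (β₂ β₃ q₁ q₂ p₁ p₂ : ℝ) :
    deriv (fun t => Xsw β₂ β₃ q₁ q₂ p₁ t) p₂ =
      2 * (q₁ * p₂ - q₂ * p₁) * q₁ := by
  have h : HasDerivAt (fun t => Xsw β₂ β₃ q₁ q₂ p₁ t)
      (2 * (q₁ * p₂ - q₂ * p₁) * q₁) p₂ := by
    have ha : HasDerivAt (fun t : ℝ => (q₁ * t - q₂ * p₁) ^ 2)
        (2 * (q₁ * p₂ - q₂ * p₁) * q₁) p₂ := by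
      have := (((hasDerivAt_id p₂).const_mul q₁).sub_const (q₂ * p₁)).pow 2
      refine (this.congr_deriv ?_).congr_of_eventuallyEq (Filter.Eventually.of_forall fun t => ?_)
      · simp <;> ring
      · simp [Xsw, Hsw] <;> ring
    have := (ha.add (hasDerivAt_const p₂ (2 * β₂ * q₂ ^ 2 / q₁ ^ 2))).add
      (hasDerivAt_const p₂ (2 * β₃ * q₁ ^ 2 / q₂ ^ 2))
    refine (this.congr_deriv ?_).congr_of_eventuallyEq (Filter.Eventually.of_forall fun t => ?_)
    · simp <;> ring
    · simp [Xsw, Hsw] <;> ring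
  exact h.deriv

lemma deriv_H_q1 (β₁ β₂ β₃ q₁ q₂ p₁ p₂ : ℝ) (h1 : q₁ ≠ 0) :
    deriv (fun t => Hsw β₁ β₂ β₃ t q₂ p₁ p₂) q₁ =
      β₁ * (2 * q₁) - 2 * β₂ * q₁ / (q₁ ^ 2) ^ 2 := by
  have hpow : (q₁ : ℝ) ^ 2 ≠ 0 := pow_ne_zero 2 h1
  have h : HasDerivAt (fun t => Hsw β₁ β₂ β₃ t q₂ p₁ p₂)
      (β₁ * (2 * q₁) - 2 * β₂ * q₁ / (q₁ ^ 2) ^ 2) q₁ := by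
    have ha : HasDerivAt (fun t : ℝ => β₁ * (t ^ 2 + q₂ ^ 2)) (β₁ * (2 * q₁)) q₁ := by
      have := (((hasDerivAt_id q₁).pow 2).add_const (q₂ ^ 2)).const_mul β₁
      refine (this.congr_deriv ?_).congr_of_eventuallyEq (Filter.Eventually.of_forall fun t => ?_)
      · simp <;> ring
      · simp [Xsw, Hsw] <;> ring
    have hb : HasDerivAt (fun t : ℝ => β₂ / t ^ 2)
        (-(2 * β₂ * q₁ / (q₁ ^ 2) ^ 2)) q₁ := by
      have := (hasDerivAt_const q₁ β₂).div ((hasDerivAt_id q₁).pow 2) hpow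
      refine (this.congr_deriv ?_).congr_of_eventuallyEq (Filter.Eventually.of_forall fun t => ?_)
      · simp <;> ring
      · simp [Xsw, Hsw] <;> ring
    have := (((hasDerivAt_const q₁ ((p₁ ^ 2 + p₂ ^ 2) / 2)).add ha).add hb).add
      (hasDerivAt_const q₁ (β₃ / q₂ ^ 2))
    refine (this.congr_deriv ?_).congr_of_eventuallyEq (Filter.Eventually.of_forall fun t => ?_)
    · simp <;> ring
    · simp [Xsw, Hsw] <;> ring
  exact h.deriv

lemma deriv_H_q2 (β₁ β₂ β₃ q₁ q₂ p₁ p₂ : ℝ) (h2 : q₂ ≠ 0) :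
    deriv (fun t => Hsw β₁ β₂ β₃ q₁ t p₁ p₂) q₂ =
      β₁ * (2 * q₂) - 2 * β₃ * q₂ / (q₂ ^ 2) ^ 2 := by
  have hpow : (q₂ : ℝ) ^ 2 ≠ 0 := pow_ne_zero 2 h2
  have h : HasDerivAt (fun t => Hsw β₁ β₂ β₃ q₁ t p₁ p₂)
      (β₁ * (2 * q₂) - 2 * β₃ * q₂ / (q₂ ^ 2) ^ 2) q₂ := by
    have ha : HasDerivAt (fun t : ℝ => β₁ * (q₁ ^ 2 + t ^ 2)) (β₁ * (2 * q₂)) q₂ := by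
      have := (((hasDerivAt_id q₂).pow 2).const_add (q₁ ^ 2)).const_mul β₁
      refine (this.congr_deriv ?_).congr_of_eventuallyEq (Filter.Eventually.of_forall fun t => ?_)
      · simp <;> ring
      · simp [Xsw, Hsw] <;> ring
    have hb : HasDerivAt (fun t : ℝ => β₃ / t ^ 2)
        (-(2 * β₃ * q₂ / (q₂ ^ 2) ^ 2)) q₂ := by
      have := (hasDerivAt_const q₂ β₃).div ((hasDerivAt_id q₂).pow 2) hpow
      refine (this.congr_deriv ?_).congr_of_eventuallyEq (Filter.Eventually.of_forall fun t => ?_)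
      · simp <;> ring
      · simp [Xsw, Hsw] <;> ring
    have := (((hasDerivAt_const q₂ ((p₁ ^ 2 + p₂ ^ 2) / 2)).add ha).add
      (hasDerivAt_const q₂ (β₂ / q₁ ^ 2))).add hb
    refine (this.congr_deriv ?_).congr_of_eventuallyEq (Filter.Eventually.of_forall fun t => ?_)
    · simp <;> ring
    · simp [Xsw, Hsw] <;> ring
  exact h.deriv

lemma deriv_H_p1 (β₁ β₂ β₃ q₁ q₂ p₁ p₂ : ℝ) :
    deriv (fun t => Hsw β₁ β₂ β₃ q₁ q₂ t p₂) p₁ = p₁ := by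
  have h : HasDerivAt (fun t => Hsw β₁ β₂ β₃ q₁ q₂ t p₂) p₁ p₁ := by
    have ha : HasDerivAt (fun t : ℝ => (t ^ 2 + p₂ ^ 2) / 2) p₁ p₁ := by
      have := (((hasDerivAt_id p₁).pow 2).add_const (p₂ ^ 2)).div_const 2
      refine (this.congr_deriv ?_).congr_of_eventuallyEq (Filter.Eventually.of_forall fun t => ?_)
      · simp <;> ring
      · simp [Xsw, Hsw] <;> ring
    have := ((ha.add (hasDerivAt_const p₁ (β₁ * (q₁ ^ 2 + q₂ ^ 2)))).add
      (hasDerivAt_const p₁ (β₂ / q₁ ^ 2))).add (hasDerivAt_const p₁ (β₃ / q₂ ^ 2))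
    refine (this.congr_deriv ?_).congr_of_eventuallyEq (Filter.Eventually.of_forall fun t => ?_)
    · simp <;> ring
    · simp [Xsw, Hsw] <;> ring
  exact h.deriv

lemma deriv_H_p2 (β₁ β₂ β₃ q₁ q₂ p₁ p₂ : ℝ) :
    deriv (fun t => Hsw β₁ β₂ β₃ q₁ q₂ p₁ t) p₂ = p₂ := by
  have h : HasDerivAt (fun t => Hsw β₁ β₂ β₃ q₁ q₂ p₁ t) p₂ p₂ := by
    have ha : HasDerivAt (fun t : ℝ => (p₁ ^ 2 + t ^ 2) / 2) p₂ p₂ := by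
      have := (((hasDerivAt_id p₂).pow 2).const_add (p₁ ^ 2)).div_const 2
      refine (this.congr_deriv ?_).congr_of_eventuallyEq (Filter.Eventually.of_forall fun t => ?_)
      · simp <;> ring
      · simp [Xsw, Hsw] <;> ring
    have := ((ha.add (hasDerivAt_const p₂ (β₁ * (q₁ ^ 2 + q₂ ^ 2)))).add
      (hasDerivAt_const p₂ (β₂ / q₁ ^ 2))).add (hasDerivAt_const p₂ (β₃ / q₂ ^ 2))
    refine (this.congr_deriv ?_).congr_of_eventuallyEq (Filter.Eventually.of_forall fun t => ?_)
    · simp <;> ring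
    · simp [Xsw, Hsw] <;> ring
  exact h.deriv

/-- The Poisson bracket `{X, H}` vanishes away from `q₁ = 0`, `q₂ = 0`. -/
theorem poisson_bracket_Xsw_Hsw_eq_zero (β₁ β₂ β₃ q₁ q₂ p₁ p₂ : ℝ)
    (h1 : q₁ ≠ 0) (h2 : q₂ ≠ 0) :
    deriv (fun t => Xsw β₂ β₃ t q₂ p₁ p₂) q₁ * deriv (fun t => Hsw β₁ β₂ β₃ q₁ q₂ t p₂) p₁
    + deriv (fun t => Xsw β₂ β₃ q₁ t p₁ p₂) q₂ * deriv (fun t => Hsw β₁ β₂ β₃ q₁ q₂ p₁ t) p₂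
    - deriv (fun t => Xsw β₂ β₃ q₁ q₂ t p₂) p₁ * deriv (fun t => Hsw β₁ β₂ β₃ t q₂ p₁ p₂) q₁
    - deriv (fun t => Xsw β₂ β₃ q₁ q₂ p₁ t) p₂ * deriv (fun t => Hsw β₁ β₂ β₃ q₁ t p₁ p₂) q₂
    = 0 := by
  rw [deriv_X_q1 β₂ β₃ q₁ q₂ p₁ p₂ h1, deriv_X_q2 β₂ β₃ q₁ q₂ p₁ p₂ h2,
    deriv_X_p1, deriv_X_p2, deriv_H_q1 β₁ β₂ β₃ q₁ q₂ p₁ p₂ h1,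
    deriv_H_q2 β₁ β₂ β₃ q₁ q₂ p₁ p₂ h2, deriv_H_p1, deriv_H_p2]
  field_simp
  ring
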